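/- Let {I_α : α < 𝔠} enumerate (with possible repetitions) all nonempty open intervals in ℝ. Then there exists a family of pairwise disjoint perfect sets {P_α : α < 𝔠} with P_α ⊆ I_α for each α, such that the union P = ⋃_{α<𝔠} P_α is meager in ℝ and linearly independent over ℚ. -/

import Mathlib

noncomputable section

namespace S3

def bc (σ : ℕ → Bool) (n : ℕ) : ℕ := ∑ k ∈ Finset.range n, if σ k then 2^k else 0

def rk (σ : ℕ → Bool) (n : ℕ) : ℕ := 2^n + bc σ n

def ps (σ : ℕ → Bool) (n : ℕ) : ℕ := (rk σ n)^2

lemma bc_lt (σ : ℕ → Bool) (n : ℕ) : bc σ n < 2^n := by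
  induction n with
  | zero => simp [bc]
  | succ n ih =>
    have : bc σ (n+1) = bc σ n + (if σ n then 2^n else 0) := by
      simp [bc, Finset.sum_range_succ]
    rw [this, pow_succ]
    rcases ihh : σ n <;> simp [ihh] <;> omega

lemma bc_congr {σ τ : ℕ → Bool} {n : ℕ} (h : ∀ k < n, σ k = τ k) : bc σ n = bc τ n := by
  unfold bc
  apply Finset.sum_congr rfl
  intro k hk
  rw [h k (Finset.mem_range.mp hk)]

lemma bc_inj {σ τ : ℕ → Bool} {n : ℕ} (h : bc σ n = bc τ n) : ∀ k < n, σ k = τ k := by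
  induction n with
  | zero => omega
  | succ n ih =>
    have e1 : bc σ (n+1) = bc σ n + (if σ n then 2^n else 0) := by
      simp [bc, Finset.sum_range_succ]
    have e2 : bc τ (n+1) = bc τ n + (if τ n then 2^n else 0) := by
      simp [bc, Finset.sum_range_succ]
    have b1 := bc_lt σ n
    have b2 := bc_lt τ n
    rw [e1, e2] at h
    have hnn : σ n = τ n := by
      rcases h1 : σ n <;> rcases h2 : τ n <;> simp [h1, h2] at h ⊢ <;> omega
    have hbc : bc σ n = bc τ n := by
      rcases h1 : σ n <;> rcases h2 : τ n <;> rw [h1, h2] at hnn <;> simp [h1, h2] at h <;> omega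
    intro k hk
    rcases Nat.lt_succ_iff_lt_or_eq.mp hk with h' | h'
    · exact ih hbc k h'
    · subst h'; exact hnn

lemma rk_lb (σ : ℕ → Bool) (n : ℕ) : 2^n ≤ rk σ n := Nat.le_add_right _ _

lemma rk_ub (σ : ℕ → Bool) (n : ℕ) : rk σ n < 2^(n+1) := by
  have := bc_lt σ n
  unfold rk; rw [pow_succ]; omega

lemma rk_inj {σ τ : ℕ → Bool} {n m : ℕ} (h : rk σ n = rk τ m) :
    n = m ∧ ∀ k < n, σ k = τ k := by
  have hnm : n = m := by
    by_contra hne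
    rcases Nat.lt_or_ge n m with hlt | hge
    · have := rk_ub σ n
      have := rk_lb τ m
      have : 2^(n+1) ≤ 2^m := Nat.pow_le_pow_right (by norm_num) hlt
      omega
    · have hlt : m < n := by omega
      have := rk_ub τ m
      have := rk_lb σ n
      have : 2^(m+1) ≤ 2^n := Nat.pow_le_pow_right (by norm_num) hlt
      omega
  subst hnm
  refine ⟨rfl, bc_inj ?_⟩
  unfold rk at h; omega

lemma rk_succ_gt (σ : ℕ → Bool) (n : ℕ) : rk σ n < rk σ (n+1) :=
  lt_of_lt_of_le (rk_ub σ n) (rk_lb σ (n+1))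

lemma pos_strictMono (σ : ℕ → Bool) : StrictMono (ps σ) := by
  apply strictMono_nat_of_lt_succ
  intro n
  exact Nat.pow_lt_pow_left (rk_succ_gt σ n) (by norm_num)

lemma pos_inj {σ τ : ℕ → Bool} {n m : ℕ} (h : ps σ n = ps τ m) :
    n = m ∧ ∀ k < n, σ k = τ k := by
  apply rk_inj
  exact Nat.pow_left_injective (by norm_num) h

lemma pos_congr {σ τ : ℕ → Bool} {n : ℕ} (h : ∀ k < n, σ k = τ k) : ps σ n = ps τ n := by
  unfold ps rk; rw [bc_congr h]

lemma pos_ge (σ : ℕ → Bool) (n : ℕ) : n + 1 ≤ ps σ n := by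
  have h1 : 2^n ≤ rk σ n := rk_lb σ n
  have h2 : rk σ n ≤ (rk σ n)^2 := by nlinarith [rk_lb σ n, Nat.one_le_two_pow (n := n)]
  have := Nat.lt_two_pow_self (n := n)
  unfold ps; omega

end S3

namespace S3

def t (σ : ℕ → Bool) (n : ℕ) : ℝ := (2⁻¹ : ℝ)^(ps σ n)

lemma t_pos (σ : ℕ → Bool) (n : ℕ) : 0 < t σ n := by unfold t; positivity

lemma half_pow_mono {a b : ℕ} (h : a ≤ b) : (2⁻¹:ℝ)^b ≤ (2⁻¹:ℝ)^a :=
  pow_le_pow_of_le_one (by norm_num) (by norm_num) h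

lemma t_le (σ : ℕ → Bool) (n : ℕ) : t σ n ≤ (2⁻¹:ℝ)^(n+1) :=
  half_pow_mono (pos_ge σ n)

lemma summable_t (σ : ℕ → Bool) : Summable (t σ) := by
  apply Summable.of_nonneg_of_le (fun n => (t_pos σ n).le)
    (fun n => (t_le σ n).trans (half_pow_mono (Nat.le_succ n)))
  exact summable_geometric_of_lt_one (by norm_num) (by norm_num)

lemma pow_mul_inv_pow' (a c : ℕ) : (2:ℝ)^a * (2⁻¹:ℝ)^(c + a) = (2⁻¹:ℝ)^c := by
  rw [pow_add]
  have h1 : (2:ℝ)^a * (2⁻¹:ℝ)^a = 1 := by rw [← mul_pow]; norm_num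
  calc (2:ℝ)^a * ((2⁻¹:ℝ)^c * (2⁻¹:ℝ)^a) = (2⁻¹:ℝ)^c * ((2:ℝ)^a * (2⁻¹:ℝ)^a) := by ring
    _ = (2⁻¹:ℝ)^c := by rw [h1, mul_one]

lemma pow_mul_inv_pow {a b : ℕ} (h : a ≤ b) : (2:ℝ)^a * (2⁻¹:ℝ)^b = (2⁻¹:ℝ)^(b - a) := by
  have hb : b = (b - a) + a := by omega
  rw [show ((2⁻¹:ℝ)^b = (2⁻¹:ℝ)^((b-a)+a)) by rw [← hb]]
  exact pow_mul_inv_pow' a (b - a)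

lemma ps_add_ge (σ : ℕ → Bool) (n₀ k : ℕ) : ps σ n₀ + k ≤ ps σ (k + n₀) := by
  induction k with
  | zero => simp
  | succ k ih =>
    have h2 : ps σ (k + n₀) < ps σ (k + 1 + n₀) :=
      pos_strictMono σ (show k + n₀ < k + 1 + n₀ by omega)
    omega

lemma tsum_geom_half : ∑' k : ℕ, (2⁻¹:ℝ)^k = 2 := by
  rw [tsum_geometric_of_lt_one (by norm_num) (by norm_num)]
  norm_num

lemma tail_le (σ : ℕ → Bool) (n₀ : ℕ) :
    ∑' k : ℕ, t σ (k + n₀) ≤ 2 * (2⁻¹:ℝ)^(ps σ n₀) := by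
  have h1 : ∀ k : ℕ, t σ (k + n₀) ≤ (2⁻¹:ℝ)^(ps σ n₀) * (2⁻¹:ℝ)^k := by
    intro k
    rw [← pow_add]
    exact half_pow_mono (ps_add_ge σ n₀ k)
  have hs : Summable (fun k : ℕ => (2⁻¹:ℝ)^(ps σ n₀) * (2⁻¹:ℝ)^k) :=
    (summable_geometric_of_lt_one (by norm_num) (by norm_num)).mul_left _
  calc ∑' k : ℕ, t σ (k + n₀) ≤ ∑' k : ℕ, (2⁻¹:ℝ)^(ps σ n₀) * (2⁻¹:ℝ)^k :=
        Summable.tsum_le_tsum h1 ((summable_t σ).comp_injective (fun a b hab => by simpa using hab : Function.Injective (· + n₀))) hs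
    _ = (2⁻¹:ℝ)^(ps σ n₀) * 2 := by rw [tsum_mul_left, tsum_geom_half]
    _ = 2 * (2⁻¹:ℝ)^(ps σ n₀) := by ring

lemma tail_nonneg (σ : ℕ → Bool) (n₀ : ℕ) : 0 ≤ ∑' k : ℕ, t σ (k + n₀) :=
  tsum_nonneg (fun k => (t_pos σ _).le)

def xr (σ : ℕ → Bool) : ℝ := ∑' n, t σ n

lemma xr_pos (σ : ℕ → Bool) : 0 < xr σ :=
  Summable.tsum_pos (summable_t σ) (fun n => (t_pos σ n).le) 0 (t_pos σ 0)

lemma continuous_bc (n : ℕ) : Continuous (fun σ => bc σ n) := by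
  unfold bc
  apply continuous_finset_sum
  intro k _
  exact Continuous.comp
    (continuous_of_discreteTopology (f := fun b : Bool => if b then 2^k else 0))
    (continuous_apply k)

lemma continuous_t (n : ℕ) : Continuous (fun σ => t σ n) := by
  have hps : Continuous (fun σ : ℕ → Bool => ps σ n) := by
    have : (fun σ : ℕ → Bool => ps σ n) = (fun m : ℕ => (2^n + m)^2) ∘ (fun σ => bc σ n) := by
      funext σ; rfl
    rw [this]
    exact Continuous.comp (continuous_of_discreteTopology) (continuous_bc n)
  have : (fun σ => t σ n) = (fun m : ℕ => (2⁻¹:ℝ)^m) ∘ (fun σ : ℕ → Bool => ps σ n) := by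
    funext σ; rfl
  rw [this]
  exact Continuous.comp (continuous_of_discreteTopology) hps

lemma continuous_xr : Continuous xr := by
  apply continuous_tsum continuous_t
    (summable_geometric_of_lt_one (by norm_num : (0:ℝ) ≤ 2⁻¹) (by norm_num))
  intro n σ
  rw [Real.norm_eq_abs, abs_of_pos (t_pos σ n)]
  exact (t_le σ n).trans (half_pow_mono (Nat.le_succ n))

end S3

namespace S3
lemma pow_sub_eq {a b : ℕ} (h : a ≤ b) : (2:ℝ)^(b - a) = 2^b * (2⁻¹:ℝ)^a := by
  have hb : b = (b - a) + a := by omega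
  calc (2:ℝ)^(b-a) = 2^(b-a) * (2^a * (2⁻¹:ℝ)^a) := by rw [← mul_pow]; norm_num
    _ = (2^((b-a)+a)) * (2⁻¹:ℝ)^a := by rw [pow_add]; ring
    _ = 2^b * (2⁻¹:ℝ)^a := by rw [← hb]
end S3
namespace S3

set_option maxHeartbeats 1000000 in
theorem linIndep_xr : LinearIndependent ℚ xr := by
  classical
  rw [linearIndependent_iff']
  intro s g hsum i₀ hi₀
  by_contra hg0
  -- clear denominators
  set d : ℕ := ∏ i ∈ s, (g i).den with hd
  have hd_pos : 0 < d := Finset.prod_pos (fun i _ => (g i).pos)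
  set c : (ℕ → Bool) → ℤ := fun i => (g i).num * ((d / (g i).den : ℕ) : ℤ) with hc
  have hcq : ∀ i ∈ s, (c i : ℚ) = g i * d := by
    intro i hi
    have hdvd : (g i).den ∣ d := Finset.dvd_prod_of_mem _ hi
    have hden : ((g i).den : ℚ) ≠ 0 := by exact_mod_cast (g i).den_nz
    have h1 : (g i).den * (d / (g i).den) = d := Nat.mul_div_cancel' hdvd
    have h2 : ((g i).num : ℚ) = g i * (g i).den := (div_eq_iff hden).mp (Rat.num_div_den (g i))
    calc (c i : ℚ) = ((g i).num : ℚ) * ((d / (g i).den : ℕ) : ℚ) := by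
          simp only [hc, Int.cast_mul, Int.cast_natCast]
      _ = g i * (((g i).den : ℚ) * ((d / (g i).den : ℕ) : ℚ)) := by rw [h2]; ring
      _ = g i * d := by rw [← Nat.cast_mul, h1]
  have hd0 : (d:ℚ) ≠ 0 := Nat.cast_ne_zero.mpr hd_pos.ne'
  have hci₀ : c i₀ ≠ 0 := by
    intro h0
    have h1 : (c i₀ : ℚ) = 0 := by exact_mod_cast h0
    rw [hcq i₀ hi₀] at h1
    exact hg0 ((mul_eq_zero.mp h1).resolve_right hd0)
  -- real relation with integer coefficients
  have hre : ∑ i ∈ s, (c i : ℝ) * xr i = 0 := by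
    have h1 : ∑ i ∈ s, (g i : ℝ) * xr i = 0 := by
      rw [← hsum]
      exact Finset.sum_congr rfl (fun i _ => (Rat.smul_def _ _).symm)
    have h2 : ∀ i ∈ s, (c i : ℝ) * xr i = (d:ℝ) * ((g i:ℝ) * xr i) := by
      intro i hi
      have h3 := congrArg (fun q : ℚ => (q : ℝ)) (hcq i hi)
      push_cast at h3
      rw [h3]; ring
    rw [Finset.sum_congr rfl h2, ← Finset.mul_sum, h1, mul_zero]
  set s' : Finset (ℕ → Bool) := s.filter (fun i => c i ≠ 0) with hs'
  have hi₀' : i₀ ∈ s' := Finset.mem_filter.mpr ⟨hi₀, hci₀⟩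
  have hs'ne : s'.Nonempty := ⟨i₀, hi₀'⟩
  have hcne : ∀ i ∈ s', c i ≠ 0 := fun i hi => (Finset.mem_filter.mp hi).2
  have hre' : ∑ i ∈ s', (c i : ℝ) * xr i = 0 := by
    rw [hs', Finset.sum_filter_of_ne, hre]
    intro x _ hx h0
    exact hx (by rw [h0]; simp)
  -- size bound
  set Mz : ℤ := ∑ i ∈ s', |c i| with hM
  have hM1 : 1 ≤ Mz := le_trans (Int.one_le_abs (hcne i₀ hi₀'))
    (Finset.single_le_sum (fun j _ => abs_nonneg (c j)) hi₀')
  have habs_le : ∀ i ∈ s', |c i| ≤ Mz :=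
    fun i hi => Finset.single_le_sum (fun j _ => abs_nonneg (c j)) hi
  -- separation level
  have hdif : ∀ i j : (ℕ → Bool), i ≠ j → ∃ k, i k ≠ j k := by
    intro i j hij; by_contra hc'; push_neg at hc'; exact hij (funext hc')
  set D : (ℕ → Bool) → (ℕ → Bool) → ℕ :=
    fun i j => if h : i = j then 0 else Nat.find (hdif i j h) + 1 with hD
  set N₀ : ℕ := s'.sup (fun i => s'.sup (D i)) with hN₀
  have hsep : ∀ i ∈ s', ∀ j ∈ s', i ≠ j → ∃ k < N₀, i k ≠ j k := by
    intro i hi j hj hij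
    refine ⟨Nat.find (hdif i j hij), ?_, Nat.find_spec (hdif i j hij)⟩
    have h1 : D i j ≤ s'.sup (D i) := Finset.le_sup hj
    have h2 : s'.sup (D i) ≤ N₀ := Finset.le_sup (f := fun i => s'.sup (D i)) hi
    have h3 : D i j = Nat.find (hdif i j hij) + 1 := by rw [hD]; exact dif_neg hij
    omega
  set N : ℕ := max N₀ (2*Mz+1).toNat with hN
  set G : ℕ := 2^(N+2) with hG
  have hG1 : 1 ≤ G := Nat.one_le_two_pow
  have hMzG : 2*Mz + 1 < (2:ℤ)^G := by
    have h1 : (2*Mz+1).toNat ≤ N := le_max_right _ _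
    have h2 : N < 2^N := Nat.lt_two_pow_self (n := N)
    have hNG : N ≤ G := le_trans (Nat.le_of_lt h2) (Nat.pow_le_pow_right (by norm_num) (by omega))
    have h3 : (2:ℕ)^N ≤ 2^G := Nat.pow_le_pow_right (by norm_num) hNG
    have h4 : (2*Mz+1).toNat < 2^G := by omega
    calc 2*Mz+1 ≤ ((2*Mz+1).toNat : ℤ) := Int.self_le_toNat _
      _ < ((2^G : ℕ) : ℤ) := by exact_mod_cast h4
      _ = (2:ℤ)^G := by push_cast; ring
  -- minimal element at level N+1
  obtain ⟨istar, hist, hmin⟩ := Finset.exists_min_image s' (fun i => ps i (N+1)) hs'ne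
  set pp : ℕ := ps istar (N+1) with hpp
  set P : ℕ := (2^(N+1) - 1)^2 with hP
  have h2pow1 : 1 ≤ (2:ℕ)^(N+1) := Nat.one_le_two_pow
  have hps_le_P : ∀ (i : ℕ → Bool), ∀ n, n ≤ N → ps i n ≤ P := by
    intro i n hn
    have hub := rk_ub i n
    have hmono : (2:ℕ)^(n+1) ≤ 2^(N+1) := Nat.pow_le_pow_right (by norm_num) (by omega)
    have h1 : rk i n ≤ 2^(N+1) - 1 := by omega
    exact Nat.pow_le_pow_left h1 2
  obtain ⟨b, hb⟩ : ∃ b, (2:ℕ)^(N+1) = b + 1 := ⟨2^(N+1) - 1, by omega⟩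
  have hPb : P = b^2 := by rw [hP, hb]; simp
  have hGb : G = 2*b + 2 := by
    rw [hG, pow_succ, hb]; ring
  have hrkstar : b + 1 ≤ rk istar (N+1) := by rw [← hb]; exact rk_lb _ _
  have hppsq : pp = (rk istar (N+1))^2 := rfl
  have hPStar : P + G ≤ pp + 1 := by
    have h1 : (b+1)^2 ≤ pp := by rw [hppsq]; exact Nat.pow_le_pow_left hrkstar 2
    have h2 : (b+1)^2 = b^2 + 2*b + 1 := by ring
    omega
  have hPle : P ≤ pp := by omega
  -- gaps
  have hgap : ∀ i ∈ s', i ≠ istar → pp + G + 1 ≤ ps i (N+1) := by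
    intro i hi hne
    have hne' : ps i (N+1) ≠ pp := by
      intro he
      obtain ⟨k, hk, hkne⟩ := hsep i hi istar hist hne
      exact hkne ((pos_inj he).2 k (by omega))
    have hge : pp ≤ ps i (N+1) := hmin i hi
    have hrklt : rk istar (N+1) < rk i (N+1) := by
      by_contra hle
      push_neg at hle
      have : ps i (N+1) ≤ pp := by
        rw [hppsq]; exact Nat.pow_le_pow_left hle 2
      omega
    have h1 : (rk istar (N+1) + 1)^2 ≤ ps i (N+1) := Nat.pow_le_pow_left (by omega) 2
    have h2 : (rk istar (N+1) + 1)^2 = (rk istar (N+1))^2 + 2*(rk istar (N+1)) + 1 := by ring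
    have h3 : G ≤ 2 * rk istar (N+1) := by omega
    omega
  have hgap2 : pp + G + 1 ≤ ps istar (N+2) := by
    have h0 : rk istar (N+1) < rk istar (N+2) := rk_succ_gt istar (N+1)
    have h1 : (rk istar (N+1) + 1)^2 ≤ ps istar (N+2) := Nat.pow_le_pow_left (by omega) 2
    have h2 : (rk istar (N+1) + 1)^2 = (rk istar (N+1))^2 + 2*(rk istar (N+1)) + 1 := by ring
    have h3 : G ≤ 2 * rk istar (N+1) := by omega
    omega
  -- decomposition
  set HS : (ℕ → Bool) → ℝ := fun i => ∑ n ∈ Finset.range (N+1), t i n with hHS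
  set TL : (ℕ → Bool) → ℝ := fun i => ∑' m, t i (m + (N+1)) with hTL
  have hdecomp : ∀ i : ℕ → Bool, xr i = HS i + TL i :=
    fun i => (Summable.sum_add_tsum_nat_add (N+1) (summable_t i)).symm
  set TL2 : ℝ := ∑' m, t istar (m + (N+2)) with hTL2
  have hsumtail : Summable (fun m => t istar (m + (N+1))) :=
    (summable_t istar).comp_injective
      (fun a b hab => by simpa using hab : Function.Injective (· + (N+1)))
  have hpeel : TL istar = t istar (N+1) + TL2 := by
    simp only [hTL]
    rw [Summable.tsum_eq_zero_add hsumtail]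
    congr 1
    · simp
    · apply tsum_congr; intro m; congr 1; omega
  -- integer head sum
  set A : ℤ := ∑ i ∈ s', c i * ∑ n ∈ Finset.range (N+1), 2^(P - ps i n) with hA
  have hAr : (A : ℝ) = 2^P * ∑ i ∈ s', (c i:ℝ) * HS i := by
    rw [hA]
    push_cast
    rw [Finset.mul_sum]
    apply Finset.sum_congr rfl
    intro i _
    simp only [hHS]
    rw [Finset.mul_sum, Finset.mul_sum, Finset.mul_sum]
    apply Finset.sum_congr rfl
    intro n hn
    have hnN : n ≤ N := by have := Finset.mem_range.mp hn; omega
    have key : (2:ℝ)^(P - ps i n) = 2^P * t i n := by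
      rw [show t i n = (2⁻¹:ℝ)^(ps i n) from rfl]
      exact pow_sub_eq (hps_le_P i n hnN)
    rw [key]; ring
  -- master equation
  set R : ℝ := ∑ i ∈ s'.erase istar, (c i:ℝ) * TL i with hR
  set E : ℝ := (2:ℝ)^pp * ((c istar:ℝ) * TL2 + R) with hE
  have hsplit : (∑ i ∈ s', (c i:ℝ) * HS i) + ((c istar:ℝ) * (t istar (N+1) + TL2) + R) = 0 := by
    rw [← hre']
    have h1 : ∑ i ∈ s', (c i:ℝ) * xr i = ∑ i ∈ s', ((c i:ℝ) * HS i + (c i:ℝ) * TL i) :=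
      Finset.sum_congr rfl (fun i _ => by rw [hdecomp i]; ring)
    rw [h1, Finset.sum_add_distrib]
    congr 1
    rw [← Finset.add_sum_erase _ _ hist, hpeel, hR]
  have hK1 : (2:ℝ)^pp * t istar (N+1) = 1 := by
    have h1 : t istar (N+1) = (2⁻¹:ℝ)^pp := rfl
    rw [h1, pow_mul_inv_pow (le_refl pp), Nat.sub_self, pow_zero]
  have hK2 : (2:ℝ)^pp * (∑ i ∈ s', (c i:ℝ) * HS i) = (A:ℝ) * 2^(pp-P) := by
    rw [show (2:ℝ)^pp = 2^(pp-P) * 2^P by rw [← pow_add]; congr 1; omega]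
    rw [mul_assoc, ← hAr]; ring
  have hmaster : (A:ℝ) * 2^(pp - P) + (c istar:ℝ) + E = 0 := by
    have h0 : (2:ℝ)^pp * ((∑ i ∈ s', (c i:ℝ) * HS i)
        + ((c istar:ℝ) * (t istar (N+1) + TL2) + R)) = 0 := by rw [hsplit, mul_zero]
    have hexp : (2:ℝ)^pp * ((∑ i ∈ s', (c i:ℝ) * HS i)
          + ((c istar:ℝ) * (t istar (N+1) + TL2) + R))
        = (2:ℝ)^pp * (∑ i ∈ s', (c i:ℝ) * HS i)
          + (c istar:ℝ) * ((2:ℝ)^pp * t istar (N+1)) + E := by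
      rw [hE]; ring
    rw [hexp, hK2, hK1, mul_one] at h0
    exact h0
  -- bound E
  have hMzR : (Mz:ℝ) = ∑ i ∈ s', |(c i:ℝ)| := by rw [hM]; push_cast; rfl
  have htl2b : |(c istar:ℝ) * TL2| ≤ |(c istar:ℝ)| * (2 * (2⁻¹:ℝ)^(pp+G+1)) := by
    rw [abs_mul]
    apply mul_le_mul_of_nonneg_left _ (abs_nonneg _)
    rw [abs_of_nonneg (tail_nonneg istar (N+2))]
    calc TL2 ≤ 2 * (2⁻¹:ℝ)^(ps istar (N+2)) := tail_le istar (N+2)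
      _ ≤ 2 * (2⁻¹:ℝ)^(pp+G+1) := by
          have := half_pow_mono hgap2; linarith
  have htlb : ∀ i ∈ s'.erase istar, |(c i:ℝ) * TL i| ≤ |(c i:ℝ)| * (2 * (2⁻¹:ℝ)^(pp+G+1)) := by
    intro i hi
    have hi' : i ∈ s' := Finset.mem_of_mem_erase hi
    have hne : i ≠ istar := Finset.ne_of_mem_erase hi
    rw [abs_mul]
    apply mul_le_mul_of_nonneg_left _ (abs_nonneg _)
    simp only [hTL]; rw [abs_of_nonneg (tail_nonneg i (N+1))]
    calc (∑' m, t i (m + (N+1))) ≤ 2 * (2⁻¹:ℝ)^(ps i (N+1)) := tail_le i (N+1)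
      _ ≤ 2 * (2⁻¹:ℝ)^(pp+G+1) := by
          have := half_pow_mono (hgap i hi' hne); linarith
  have hEbound : |E| ≤ (Mz:ℝ) * (2⁻¹:ℝ)^G := by
    have hp2 : (0:ℝ) < 2^pp := by positivity
    have h1 : |(c istar:ℝ) * TL2 + R| ≤ (∑ i ∈ s', |(c i:ℝ)|) * (2 * (2⁻¹:ℝ)^(pp+G+1)) := by
      calc |(c istar:ℝ) * TL2 + R| ≤ |(c istar:ℝ) * TL2| + |R| := abs_add_le _ _
        _ ≤ |(c istar:ℝ) * TL2| + ∑ i ∈ s'.erase istar, |(c i:ℝ) * TL i| := by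
            have := Finset.abs_sum_le_sum_abs (fun i => (c i:ℝ) * TL i) (s'.erase istar)
            rw [hR]; linarith
        _ ≤ |(c istar:ℝ)| * (2 * (2⁻¹:ℝ)^(pp+G+1))
            + ∑ i ∈ s'.erase istar, |(c i:ℝ)| * (2 * (2⁻¹:ℝ)^(pp+G+1)) := by
            apply add_le_add htl2b
            exact Finset.sum_le_sum htlb
        _ = (∑ i ∈ s', |(c i:ℝ)|) * (2 * (2⁻¹:ℝ)^(pp+G+1)) := by
            rw [Finset.sum_mul,
              ← Finset.add_sum_erase _ (fun i => |(c i:ℝ)| * (2 * (2⁻¹:ℝ)^(pp+G+1))) hist]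
    have hkey : (2:ℝ)^pp * (2⁻¹:ℝ)^(pp+G+1) = (2⁻¹:ℝ)^(G+1) := by
      rw [show pp + G + 1 = (G+1) + pp by ring]
      exact pow_mul_inv_pow' pp (G+1)
    have hGsucc : (2:ℝ) * (2⁻¹:ℝ)^(G+1) = (2⁻¹:ℝ)^G := by
      rw [pow_succ]; ring
    calc |E| = (2:ℝ)^pp * |(c istar:ℝ) * TL2 + R| := by
          rw [hE, abs_mul, abs_of_pos hp2]
      _ ≤ (2:ℝ)^pp * ((∑ i ∈ s', |(c i:ℝ)|) * (2 * (2⁻¹:ℝ)^(pp+G+1))) :=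
          mul_le_mul_of_nonneg_left h1 hp2.le
      _ = (∑ i ∈ s', |(c i:ℝ)|) * (2 * ((2:ℝ)^pp * (2⁻¹:ℝ)^(pp+G+1))) := by ring
      _ = (Mz:ℝ) * (2⁻¹:ℝ)^G := by rw [hkey, hGsucc, ← hMzR]
  -- numeric contradiction
  have hMreal : 2*(Mz:ℝ) + 1 < 2^G := by exact_mod_cast hMzG
  have hhalf : (Mz:ℝ) * (2⁻¹:ℝ)^G < 2⁻¹ := by
    have h2G : (0:ℝ) < 2^G := by positivity
    rw [inv_pow, ← div_eq_mul_inv, div_lt_iff₀ h2G]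
    linarith
  have hcstar1 : (1:ℝ) ≤ |(c istar:ℝ)| := by
    have := Int.one_le_abs (hcne istar hist)
    exact_mod_cast this
  have hcstarM : |(c istar:ℝ)| ≤ (Mz:ℝ) := by
    have := habs_le istar hist
    exact_mod_cast this
  rcases eq_or_ne A 0 with hA0 | hA0
  · rw [hA0] at hmaster
    simp only [Int.cast_zero, zero_mul, zero_add] at hmaster
    have h1 : |(c istar:ℝ)| = |E| := by
      rw [show (c istar:ℝ) = -E by linarith, abs_neg]
    have h2 : |E| ≤ (Mz:ℝ) * (2⁻¹:ℝ)^G := hEbound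
    linarith
  · have h1 : (1:ℝ) ≤ |(A:ℝ)| := by
      have := Int.one_le_abs hA0
      exact_mod_cast this
    have h2 : (2:ℝ)^(G-1) ≤ 2^(pp-P) := by
      apply pow_le_pow_right₀ (by norm_num)
      omega
    have h3 : (2:ℝ)^(G-1) ≤ |(A:ℝ) * 2^(pp-P)| := by
      rw [abs_mul, abs_of_pos (show (0:ℝ) < 2^(pp-P) by positivity)]
      exact h2.trans (le_mul_of_one_le_left (by positivity) h1)
    have h4 : |(A:ℝ) * 2^(pp-P)| ≤ (Mz:ℝ) + 2⁻¹ := by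
      have he : (A:ℝ) * 2^(pp-P) = -((c istar:ℝ) + E) := by linarith
      rw [he, abs_neg]
      calc |(c istar:ℝ) + E| ≤ |(c istar:ℝ)| + |E| := abs_add_le _ _
        _ ≤ (Mz:ℝ) + 2⁻¹ := by linarith [hEbound, hhalf]
    have h5 : (Mz:ℝ) + 2⁻¹ < 2^(G-1) := by
      have hG1' : G - 1 + 1 = G := by omega
      have he : (2:ℝ)^G = 2^(G-1) * 2 := by rw [← pow_succ, hG1']
      linarith
    linarith

end S3
namespace S3

lemma xr_injective : Function.Injective xr := LinearIndependent.injective linIndep_xr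

lemma xr_scale_ne {σ τ : ℕ → Bool} (hστ : σ ≠ τ) {a b : ℚ} (ha : a ≠ 0)
    (h : (a:ℝ) * xr σ = (b:ℝ) * xr τ) : False := by
  classical
  have hs : (τ:ℕ→Bool) ∉ ({σ} : Finset (ℕ→Bool)) := by simpa using (Ne.symm hστ)
  have hsum : ∑ i ∈ insert τ ({σ} : Finset (ℕ→Bool)),
      (fun i => if i = σ then a else -b) i • xr i = 0 := by
    rw [Finset.sum_insert hs, Finset.sum_singleton]
    show (if τ = σ then a else -b) • xr τ + (if σ = σ then a else -b) • xr σ = 0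
    rw [if_neg (fun hh => hστ hh.symm), if_pos rfl]
    rw [Rat.smul_def, Rat.smul_def]
    push_cast
    linarith [h]
  have h2 := linearIndependent_iff'.mp linIndep_xr (insert τ ({σ} : Finset (ℕ→Bool)))
    (fun i => if i = σ then a else -b) hsum σ (by simp)
  simp at h2
  exact ha h2

lemma perfect_image {C : Set (ℕ → Bool)} (hC : IsClosed C) (hCp : Preperfect C)
    {f : (ℕ → Bool) → ℝ} (hf : Continuous f) (hinj : Function.Injective f) :
    Perfect (f '' C) := by
  constructor
  · exact ((hC.isCompact).image hf).isClosed
  · rw [preperfect_iff_nhds]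
    rintro y ⟨x, hx, rfl⟩ U hU
    obtain ⟨z, hz, hzx⟩ := preperfect_iff_nhds.mp hCp x hx (f ⁻¹' U)
      (hf.continuousAt.preimage_mem_nhds hU)
    exact ⟨f z, ⟨hz.1, Set.mem_image_of_mem f hz.2⟩, fun hh => hzx (hinj hh)⟩

def Cset (L : ℕ) (σ₀ w : ℕ → Bool) : Set (ℕ → Bool) :=
  {σ | (∀ k, k < L → σ k = σ₀ k) ∧ ∀ n, L ≤ 2*n+1 → σ (2*n+1) = w n}

lemma Cset_closed (L : ℕ) (σ₀ w : ℕ → Bool) : IsClosed (Cset L σ₀ w) := by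
  have hre : Cset L σ₀ w = (⋂ k, {σ : ℕ → Bool | k < L → σ k = σ₀ k})
      ∩ ⋂ n, {σ : ℕ → Bool | L ≤ 2*n+1 → σ (2*n+1) = w n} := by
    ext σ; simp [Cset, Set.mem_iInter, Set.mem_setOf_eq]
  rw [hre]
  apply IsClosed.inter
  · apply isClosed_iInter; intro k
    by_cases h : k < L
    · have : {σ : ℕ → Bool | k < L → σ k = σ₀ k} = {σ | σ k = σ₀ k} := by ext; simp [h]
      rw [this]; exact isClosed_eq (continuous_apply k) continuous_const
    · have : {σ : ℕ → Bool | k < L → σ k = σ₀ k} = Set.univ := by ext; simp [h]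
      rw [this]; exact isClosed_univ
  · apply isClosed_iInter; intro n
    by_cases h : L ≤ 2*n+1
    · have : {σ : ℕ → Bool | L ≤ 2*n+1 → σ (2*n+1) = w n} = {σ | σ (2*n+1) = w n} := by
        ext; simp [h]
      rw [this]; exact isClosed_eq (continuous_apply _) continuous_const
    · have : {σ : ℕ → Bool | L ≤ 2*n+1 → σ (2*n+1) = w n} = Set.univ := by ext; simp [h]
      rw [this]; exact isClosed_univ

lemma Cset_nonempty (L : ℕ) (σ₀ w : ℕ → Bool) : (Cset L σ₀ w).Nonempty := by
  refine ⟨fun k => if k < L then σ₀ k else if k % 2 = 1 then w ((k-1)/2) else false, ?_, ?_⟩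
  · intro k hk; simp [hk]
  · intro n hn
    have h1 : ¬(2*n+1 < L) := by omega
    have h2 : (2*n+1) % 2 = 1 := by omega
    have h3 : (2*n+1-1)/2 = n := by omega
    simp [h1, h2, h3]

lemma Cset_preperfect (L : ℕ) (σ₀ w : ℕ → Bool) : Preperfect (Cset L σ₀ w) := by
  rw [preperfect_iff_nhds]
  intro σ hσ U hU
  set y : ℕ → (ℕ → Bool) := fun m k => if k = 2*(m + L) then !(σ k) else σ k with hy
  have hyC : ∀ m, y m ∈ Cset L σ₀ w := by
    intro m
    constructor
    · intro k hk
      have hne : k ≠ 2*(m+L) := by omega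
      simp only [hy, hne, if_false]
      exact hσ.1 k hk
    · intro n hn
      have hne : 2*n+1 ≠ 2*(m+L) := by omega
      simp only [hy, hne, if_false]
      exact hσ.2 n hn
  have hyne : ∀ m, y m ≠ σ := by
    intro m he
    have h2 := congrFun he (2*(m+L))
    simp [hy] at h2
  have htd : Filter.Tendsto y Filter.atTop (nhds σ) := by
    rw [tendsto_pi_nhds]
    intro k
    apply tendsto_atTop_of_eventually_const (i₀ := k+1)
    intro m hm
    have hne : k ≠ 2*(m+L) := by omega
    simp [hy, hne]
  have hev : y ⁻¹' U ∈ Filter.atTop := Filter.mem_map.mp (htd hU)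
  obtain ⟨m, hm⟩ := Filter.mem_atTop_sets.mp hev
  exact ⟨y m, ⟨hm m le_rfl, hyC m⟩, hyne m⟩

def Ecode (u : ℕ → Bool) : ℕ → Bool := fun n => u (Nat.unpair n).1

lemma Cset_disj {L1 L2 : ℕ} {σ1 σ2 : ℕ → Bool} {u v : ℕ → Bool} (huv : u ≠ v) :
    Cset L1 σ1 (Ecode u) ∩ Cset L2 σ2 (Ecode v) = ∅ := by
  rw [Set.eq_empty_iff_forall_notMem]
  rintro σ ⟨h1, h2⟩
  obtain ⟨k, hk⟩ : ∃ k, u k ≠ v k := by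
    by_contra hc; push_neg at hc; exact huv (funext hc)
  set n := Nat.pair k (max L1 L2) with hn
  have hge := Nat.right_le_pair k (max L1 L2)
  have e1 := h1.2 n (by omega)
  have e2 := h2.2 n (by omega)
  apply hk
  have h3 : Ecode u n = Ecode v n := by rw [← e1, ← e2]
  simpa [Ecode, hn, Nat.unpair_pair] using h3

lemma exists_cyl {F : (ℕ → Bool) → ℝ} (hF : Continuous F) {O : Set ℝ} (hO : IsOpen O)
    {σ₀ : ℕ → Bool} (hmem : F σ₀ ∈ O) :
    ∃ L, ∀ σ : ℕ → Bool, (∀ k, k < L → σ k = σ₀ k) → F σ ∈ O := by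
  by_contra h
  push_neg at h
  choose σs hσs hno using h
  have htd : Filter.Tendsto σs Filter.atTop (nhds σ₀) := by
    rw [tendsto_pi_nhds]; intro k
    apply tendsto_atTop_of_eventually_const (i₀ := k+1)
    intro m hm
    exact hσs m k (by omega)
  have htd2 : Filter.Tendsto (fun m => F (σs m)) Filter.atTop (nhds (F σ₀)) :=
    (hF.tendsto σ₀).comp htd
  obtain ⟨m, hm⟩ := (htd2.eventually (hO.eventually_mem hmem)).exists
  exact hno m hm

lemma exists_rat_ne_zero {c d : ℝ} (h : c < d) :
    ∃ r : ℚ, r ≠ 0 ∧ c < (r:ℝ) ∧ (r:ℝ) < d := by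
  obtain ⟨r1, h1, h2⟩ := exists_rat_btwn h
  rcases eq_or_ne r1 0 with rfl | hr
  · push_cast at h1 h2
    obtain ⟨r2, h3, h4⟩ := exists_rat_btwn h2
    have h5 : (0:ℚ) < r2 := by exact_mod_cast h3
    exact ⟨r2, h5.ne', lt_trans h1 h3, h4⟩
  · exact ⟨r1, hr, h1, h2⟩

lemma exists_two_rats {c d : ℝ} (h : c < d) : ∃ r1 r2 : ℚ, r1 ≠ 0 ∧ r2 ≠ 0 ∧ r1 ≠ r2 ∧
    (r1:ℝ) ∈ Set.Ioo c d ∧ (r2:ℝ) ∈ Set.Ioo c d := by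
  obtain ⟨r1, hr1, ha, hb⟩ := exists_rat_ne_zero h
  obtain ⟨r2, hr2, hc', hd'⟩ := exists_rat_ne_zero ha
  have h12 : r2 < r1 := by exact_mod_cast hd'
  exact ⟨r1, r2, hr1, hr2, h12.ne', ⟨ha, hb⟩, ⟨hc', lt_trans hd' hb⟩⟩

lemma nwd_scale (q : ℚ) : IsNowhereDense ((fun y => (q:ℝ) * y) '' Set.range xr) := by
  set S := (fun y => (q:ℝ) * y) '' Set.range xr with hS
  have hcl : IsClosed S :=
    ((isCompact_range continuous_xr).image (continuous_const.mul continuous_id)).isClosed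
  show interior (closure S) = ∅
  rw [hcl.closure_eq, Set.eq_empty_iff_forall_notMem]
  intro x hx
  obtain ⟨ε, hε, hball⟩ := Metric.isOpen_iff.mp isOpen_interior x hx
  rw [Real.ball_eq_Ioo] at hball
  obtain ⟨r1, r2, h10, h20, h12, hm1, hm2⟩ := exists_two_rats
    (show x - ε < x + ε by linarith)
  have hr1S : (r1:ℝ) ∈ S := interior_subset (hball hm1)
  have hr2S : (r2:ℝ) ∈ S := interior_subset (hball hm2)
  obtain ⟨y1, ⟨σ, rfl⟩, hv1'⟩ := hr1S
  obtain ⟨y2, ⟨τ, rfl⟩, hv2'⟩ := hr2S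
  have hv1 : (q:ℝ) * xr σ = (r1:ℝ) := hv1'
  have hv2 : (q:ℝ) * xr τ = (r2:ℝ) := hv2'
  have hστ : σ ≠ τ := by
    rintro rfl
    exact h12 (by exact_mod_cast hv1.symm.trans hv2)
  have hq : q ≠ 0 := by
    rintro rfl
    apply h10
    have : ((r1:ℚ):ℝ) = 0 := by rw [← hv1]; push_cast; ring
    exact_mod_cast this
  apply xr_scale_ne hστ (mul_ne_zero h20 hq) (a := r2 * q) (b := r1 * q)
  push_cast
  calc (r2:ℝ) * q * xr σ = (r2:ℝ) * ((q:ℝ) * xr σ) := by ring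
    _ = (r2:ℝ) * (r1:ℝ) := by rw [hv1]
    _ = (r1:ℝ) * ((q:ℝ) * xr τ) := by rw [hv2]; ring
    _ = (r1:ℝ) * q * xr τ := by ring

end S3
open Cardinal in
theorem stmt_3 {ι : Type} (hι : #ι = Cardinal.continuum) (I : ι → Set ℝ)
    (hI : ∀ i, ∃ a b : ℝ, a < b ∧ I i = Set.Ioo a b)
    (hall : ∀ a b : ℝ, a < b → ∃ i, I i = Set.Ioo a b) :
    ∃ P : ι → Set ℝ,
      (∀ i, Perfect (P i) ∧ (P i).Nonempty ∧ P i ⊆ I i) ∧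
      (Pairwise fun i j => Disjoint (P i) (P j)) ∧
      IsMeagre (⋃ i, P i) ∧
      LinearIndependent ℚ ((↑) : (⋃ i, P i) → ℝ) := by
  classical
  open S3 in
  -- embedding of ι into Cantor space
  have hmk : #(ℕ → Bool) = Cardinal.continuum := by
    rw [Cardinal.mk_arrow, Cardinal.mk_bool, Cardinal.mk_nat]
    simp [Cardinal.two_power_aleph0]
  obtain ⟨e⟩ := Cardinal.eq.mp (hι.trans hmk.symm)
  -- choose scaling and cylinder data
  set σb : ℕ → Bool := fun _ => false with hσb
  have hv : 0 < xr σb := xr_pos σb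
  have hdata : ∀ i : ι, ∃ q : ℚ, ∃ L : ℕ, q ≠ 0 ∧
      ∀ σ : ℕ → Bool, (∀ k, k < L → σ k = σb k) → (q:ℝ) * xr σ ∈ I i := by
    intro i
    obtain ⟨a, b, hab, hIi⟩ := hI i
    obtain ⟨q, hq0, hq1, hq2⟩ := exists_rat_ne_zero (div_lt_div_of_pos_right hab hv)
    have hmem : (q:ℝ) * xr σb ∈ I i := by
      rw [hIi]
      constructor
      · rw [div_lt_iff₀ hv] at hq1; linarith [hq1]
      · rw [lt_div_iff₀ hv] at hq2; linarith [hq2]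
    have hopen : IsOpen (I i) := by rw [hIi]; exact isOpen_Ioo
    obtain ⟨L, hL⟩ := exists_cyl (continuous_const.mul continuous_xr) hopen hmem
    exact ⟨q, L, hq0, hL⟩
  choose q L hq0 hmap using hdata
  set CC : ι → Set (ℕ → Bool) := fun i => Cset (L i) σb (Ecode (e i)) with hCC
  refine ⟨fun i => (fun σ => (q i : ℝ) * xr σ) '' CC i, ?_, ?_, ?_, ?_⟩
  · -- perfect, nonempty, subset
    intro i
    have hinj : Function.Injective (fun σ => (q i : ℝ) * xr σ) := by
      intro σ τ hh
      have hq : ((q i : ℝ)) ≠ 0 := by exact_mod_cast hq0 i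
      exact xr_injective (mul_left_cancel₀ hq hh)
    refine ⟨perfect_image (Cset_closed _ _ _) (Cset_preperfect _ _ _)
      (continuous_const.mul continuous_xr) hinj,
      (Cset_nonempty _ _ _).image _, ?_⟩
    rintro y ⟨σ, hσ, rfl⟩
    exact hmap i σ hσ.1
  · -- pairwise disjoint
    intro i j hij
    rw [Set.disjoint_left]
    rintro y ⟨σ, hσ, rfl⟩ ⟨τ, hτ, hyy⟩
    rcases eq_or_ne σ τ with rfl | hne
    · have hee : e i ≠ e j := fun hc => hij (e.injective hc)
      have hdisj := Cset_disj (L1 := L i) (L2 := L j) (σ1 := σb) (σ2 := σb) hee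
      exact Set.notMem_empty σ (hdisj ▸ Set.mem_inter hσ hτ)
    · have hyy' : ((q j : ℝ)) * xr τ = ((q i : ℝ)) * xr σ := hyy
      exact xr_scale_ne hne.symm (hq0 j) hyy'
  · -- meagre
    apply isMeagre_iff_countable_union_isNowhereDense.mpr
    refine ⟨Set.range (fun qq : ℚ => (fun y => (qq:ℝ) * y) '' Set.range xr), ?_,
      Set.countable_range _, ?_⟩
    · rintro t ⟨qq, rfl⟩; exact nwd_scale qq
    · rintro y hy
      rw [Set.mem_iUnion] at hy
      obtain ⟨i, σ, hσ, rfl⟩ := hy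
      exact Set.mem_sUnion.mpr ⟨_, ⟨q i, rfl⟩, ⟨xr σ, ⟨σ, rfl⟩, rfl⟩⟩
  · -- linear independence
    set T : Set ℝ := ⋃ i, (fun σ => (q i : ℝ) * xr σ) '' CC i with hT
    have hrep : ∀ y : T, ∃ p : ι × (ℕ → Bool), p.2 ∈ CC p.1 ∧ ((q p.1 : ℝ)) * xr p.2 = (y:ℝ) := by
      rintro ⟨y, hy⟩
      rw [hT, Set.mem_iUnion] at hy
      obtain ⟨i, σ, hσ, hval⟩ := hy
      exact ⟨(i, σ), hσ, hval⟩
    choose pa hmem hval using hrep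
    have hσinj : Function.Injective (fun y : T => (pa y).2) := by
      intro y z hyz
      simp only at hyz
      rcases eq_or_ne (pa y).1 (pa z).1 with he | hne
      · apply Subtype.ext
        rw [← hval y, ← hval z, hyz, he]
      · exfalso
        have hee : e (pa y).1 ≠ e (pa z).1 := fun hc => hne (e.injective hc)
        have hdisj := Cset_disj (L1 := L (pa y).1) (L2 := L (pa z).1) (σ1 := σb) (σ2 := σb) hee
        have hm2 := hmem z
        rw [← hyz] at hm2
        exact Set.notMem_empty _ (hdisj ▸ Set.mem_inter (hmem y) hm2)
    have hfun : ((↑) : T → ℝ)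
        = (fun y : T => Units.mk0 (q (pa y).1) (hq0 _)) • (xr ∘ (fun y : T => (pa y).2)) := by
      funext y
      simp only [Pi.smul_apply', Function.comp_apply, Units.smul_def, Units.val_mk0,
        Rat.smul_def]
      exact (hval y).symm
    rw [hfun]
    exact (linIndep_xr.comp _ hσinj).units_smul _
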